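/- Let G be a graph and v a simplicial vertex of G (its neighborhood induces a clique). Then tw(G) = max(deg(v), tw(G − v)), where tw denotes treewidth; in particular tw(G) ≤ max(deg(v), tw(G − v)). -/

import Mathlib

/-- `(tr, bag)` is a tree decomposition of the graph `G`. -/
def IsTreeDecomp {V T : Type} (G : SimpleGraph V) (tr : SimpleGraph T)
    (bag : T → Set V) : Prop :=
  tr.IsTree ∧ (∀ v : V, ∃ t, v ∈ bag t) ∧
    (∀ v : V, ((tr.induce {t | v ∈ bag t}).Connected)) ∧
    ∀ u v : V, G.Adj u v → ∃ t, u ∈ bag t ∧ v ∈ bag t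

/-- The treewidth of a graph: the least `k` admitting a width-`k` tree decomposition. -/
noncomputable def treewidth {V : Type} (G : SimpleGraph V) : ℕ :=
  sInf {k | ∃ (T : Type) (tr : SimpleGraph T) (bag : T → Set V),
    IsTreeDecomp G tr bag ∧ ∀ t, (bag t).ncard ≤ k + 1}

open SimpleGraph
set_option linter.unusedSectionVars false
set_option linter.unusedVariables false

section TreeLemmas

variable {T : Type} {tr : SimpleGraph T}

lemma induce_adj' {S : Set T} (a b : S) : (tr.induce S).Adj a b ↔ tr.Adj a b := Iff.rfl

/-- Lift a walk with support in `S` to the induced subgraph. -/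
lemma reachable_induce_of_walk {S : Set T} :
    ∀ {x y : T} (w : tr.Walk x y), (∀ z ∈ w.support, z ∈ S) →
      ∀ (hx : x ∈ S) (hy : y ∈ S), (tr.induce S).Reachable ⟨x, hx⟩ ⟨y, hy⟩ := by
  intro x y w
  induction w with
  | nil => intro _ hx hy; rfl
  | @cons a b c h p ih =>
      intro hs hx hy
      have hb : b ∈ S := hs b (by simp)
      have h1 : (tr.induce S).Adj ⟨a, hx⟩ ⟨b, hb⟩ := h
      exact h1.reachable.trans (ih (fun z hz => hs z (by simp [hz])) hb hy)

/-- From reachability in the induced subgraph, get a path in `tr` with support in `S`. -/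
lemma exists_path_of_induce_reachable {S : Set T} {x y : T} (hx : x ∈ S) (hy : y ∈ S)
    (h : (tr.induce S).Reachable ⟨x, hx⟩ ⟨y, hy⟩) :
    ∃ p : tr.Walk x y, p.IsPath ∧ ∀ z ∈ p.support, z ∈ S := by
  haveI := Classical.decEq T
  obtain ⟨w⟩ := h
  let w' : tr.Walk x y := w.map (SimpleGraph.Embedding.induce S).toHom
  have hsup : ∀ z ∈ w'.support, z ∈ S := by
    intro z hz
    rw [show w'.support = (w.map (SimpleGraph.Embedding.induce S).toHom).support from rfl, Walk.support_map] at hz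
    simp only [List.mem_map] at hz
    obtain ⟨a, _, rfl⟩ := hz
    exact a.2
  exact ⟨w'.bypass, w'.bypass_isPath, fun z hz => hsup z (w'.support_bypass_subset hz)⟩


lemma path_unique (ht : tr.IsTree) {x y : T} {p q : tr.Walk x y} (hp : p.IsPath) (hq : q.IsPath) :
    p = q := by
  obtain ⟨r, _, hr⟩ := ht.existsUnique_path x y
  rw [hr p hp, hr q hq]

lemma path_support_subset (ht : tr.IsTree) {S : Set T}
    (hconn : (tr.induce S).Connected) {x y : T} (hx : x ∈ S) (hy : y ∈ S)
    {p : tr.Walk x y} (hp : p.IsPath) : ∀ z ∈ p.support, z ∈ S := by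
  obtain ⟨q, hq, hqs⟩ := exists_path_of_induce_reachable hx hy (hconn ⟨x, hx⟩ ⟨y, hy⟩)
  rw [path_unique ht hp hq]
  exact hqs

/-- Two paths out of `a` that share a vertex other than `a` have the same second vertex. -/
lemma second_eq (ht : tr.IsTree) {a a' a'' b c : T}
    (h1 : tr.Adj a a') (h2 : tr.Adj a a'')
    {p' : tr.Walk a' b} {r' : tr.Walk a'' c}
    (hp : (Walk.cons h1 p').IsPath) (hr : (Walk.cons h2 r').IsPath)
    {y : T} (hyp : y ∈ p'.support) (hyr : y ∈ r'.support) : a' = a'' := by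
  classical
  rw [Walk.cons_isPath_iff] at hp hr
  have w1 : tr.Walk a y := Walk.cons h1 (p'.takeUntil y hyp)
  have hw1 : (Walk.cons h1 (p'.takeUntil y hyp)).IsPath := by
    rw [Walk.cons_isPath_iff]
    exact ⟨hp.1.takeUntil hyp, fun h => hp.2 (p'.support_takeUntil_subset hyp h)⟩
  have hw2 : (Walk.cons h2 (r'.takeUntil y hyr)).IsPath := by
    rw [Walk.cons_isPath_iff]
    exact ⟨hr.1.takeUntil hyr, fun h => hr.2 (r'.support_takeUntil_subset hyr h)⟩
  have heq := path_unique ht hw1 hw2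
  have := congrArg (fun w => Walk.getVert w 1) heq
  simpa [Walk.getVert_cons_succ, Walk.getVert_zero] using this


lemma append_isPath {a b c : T} {p : tr.Walk a b} {q : tr.Walk b c}
    (hp : p.IsPath) (hq : q.IsPath)
    (hdisj : ∀ z, z ∈ p.support → z ∈ q.support → z = b) : (p.append q).IsPath := by
  rw [Walk.isPath_def, Walk.support_append]
  refine List.Nodup.append ((Walk.isPath_def _).mp hp) ((Walk.isPath_def _).mp hq).tail ?_
  intro z hzp hzq
  have hzq' : z ∈ q.support := List.mem_of_mem_tail hzq
  have hz : z = b := hdisj z hzp hzq'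
  subst hz
  have hnd := (Walk.isPath_def _).mp hq
  rw [q.support_eq_cons] at hnd
  exact (List.nodup_cons.mp hnd).1 hzq


lemma median (ht : tr.IsTree) {c : T} :
    ∀ {a b : T} (p : tr.Walk a b), p.IsPath → ∀ (q : tr.Walk b c), q.IsPath →
      ∀ (r : tr.Walk a c), r.IsPath →
      ∃ m, m ∈ p.support ∧ m ∈ q.support ∧ m ∈ r.support := by
  intro a b p
  induction p with
  | nil =>
      intro _ q _ r _
      exact ⟨_, Walk.start_mem_support _, Walk.start_mem_support _, Walk.start_mem_support _⟩
  | @cons a a' b h p' ih =>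
      intro hp q hq r hr
      cases r with
      | nil =>
          exact ⟨_, Walk.start_mem_support _, Walk.end_mem_support _, Walk.start_mem_support _⟩
      | @cons _ a'' _ h2 r' =>
          by_cases hsame : a' = a''
          · subst hsame
            obtain ⟨m, hm1, hm2, hm3⟩ := ih hp.of_cons q hq r' hr.of_cons
            exact ⟨m, by simp [hm1], hm2, by simp [hm3]⟩
          · refine ⟨a, Walk.start_mem_support _, ?_, Walk.start_mem_support _⟩
            have hdisj : ∀ z, z ∈ (Walk.cons h p').reverse.support →
                z ∈ (Walk.cons h2 r').support → z = a := by
              intro z hz1 hz2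
              rw [Walk.support_reverse, List.mem_reverse] at hz1
              by_contra hza
              rw [Walk.support_cons, List.mem_cons] at hz1 hz2
              have hz1' : z ∈ p'.support := hz1.resolve_left hza
              have hz2' : z ∈ r'.support := hz2.resolve_left hza
              exact hsame (second_eq ht h h2 hp hr hz1' hz2')
            have hpath : ((Walk.cons h p').reverse.append (Walk.cons h2 r')).IsPath :=
              append_isPath hp.reverse hr hdisj
            rw [path_unique ht hq hpath]
            rw [Walk.mem_support_append_iff]
            left
            rw [Walk.support_reverse, List.mem_reverse]
            exact Walk.start_mem_support _


/-- helper: get a path between two points of a connected induced set, with support inside. -/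
lemma exists_path_in (ht : tr.IsTree) {S : Set T} (hS : (tr.induce S).Connected)
    {x y : T} (hx : x ∈ S) (hy : y ∈ S) :
    ∃ p : tr.Walk x y, p.IsPath ∧ ∀ z ∈ p.support, z ∈ S :=
  exists_path_of_induce_reachable hx hy (hS.preconnected ⟨x, hx⟩ ⟨y, hy⟩)

lemma helly3 (ht : tr.IsTree) {A B C : Set T}
    (hA : (tr.induce A).Connected) (hB : (tr.induce B).Connected)
    (hC : (tr.induce C).Connected)
    (hAB : (A ∩ B).Nonempty) (hBC : (B ∩ C).Nonempty) (hAC : (A ∩ C).Nonempty) :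
    (A ∩ B ∩ C).Nonempty := by
  obtain ⟨a, haA, haB⟩ := hAB
  obtain ⟨b, hbB, hbC⟩ := hBC
  obtain ⟨c, hcA, hcC⟩ := hAC
  obtain ⟨p, hp, hpS⟩ := exists_path_in ht hB haB hbB
  obtain ⟨q, hq, hqS⟩ := exists_path_in ht hC hbC hcC
  obtain ⟨r, hr, hrS⟩ := exists_path_in ht hA haA hcA
  obtain ⟨m, hm1, hm2, hm3⟩ := median ht p hp q hq r hr
  exact ⟨m, ⟨hrS m hm3, hpS m hm1⟩, hqS m hm2⟩

lemma inter_connected (ht : tr.IsTree) {A B : Set T}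
    (hA : (tr.induce A).Connected) (hB : (tr.induce B).Connected)
    (hAB : (A ∩ B).Nonempty) : (tr.induce (A ∩ B)).Connected := by
  obtain ⟨w, hwA, hwB⟩ := hAB
  haveI : Nonempty (↑(A ∩ B) : Type) := ⟨⟨w, hwA, hwB⟩⟩
  constructor
  rintro ⟨x, hxA, hxB⟩ ⟨y, hyA, hyB⟩
  obtain ⟨p, hp, hpS⟩ := exists_path_in ht hA hxA hyA
  have hpB : ∀ z ∈ p.support, z ∈ B := path_support_subset ht hB hxB hyB hp
  exact reachable_induce_of_walk (S := A ∩ B) p (fun z hz => ⟨hpS z hz, hpB z hz⟩) ⟨hxA, hxB⟩ ⟨hyA, hyB⟩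

lemma helly (ht : tr.IsTree) {ι : Type} (F : Finset ι) (S : ι → Set T)
    (hconn : ∀ i ∈ F, (tr.induce (S i)).Connected)
    (hpair : ∀ i ∈ F, ∀ j ∈ F, (S i ∩ S j).Nonempty) :
    ∃ t, ∀ i ∈ F, t ∈ S i := by
  classical
  induction F using Finset.induction_on generalizing S with
  | empty =>
      obtain ⟨t⟩ := ht.isConnected.nonempty
      exact ⟨t, by simp⟩
  | @insert a F ha ih =>
      rcases F.eq_empty_or_nonempty with rfl | ⟨i0, hi0⟩
      · obtain ⟨⟨t, htS⟩⟩ := (hconn a (by simp)).nonempty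
        exact ⟨t, by simpa using htS⟩
      · have hmema := Finset.mem_insert_self a F
        obtain ⟨t, htmem⟩ := ih (fun i => S i ∩ S a)
          (fun i hi => inter_connected ht (hconn i (Finset.mem_insert_of_mem hi))
            (hconn a hmema)
            (hpair i (Finset.mem_insert_of_mem hi) a hmema))
          (fun i hi j hj => by
            obtain ⟨x, ⟨hxi, hxj⟩, hxa⟩ := helly3 ht
              (hconn i (Finset.mem_insert_of_mem hi))
              (hconn j (Finset.mem_insert_of_mem hj))
              (hconn a hmema)
              (hpair i (Finset.mem_insert_of_mem hi) j (Finset.mem_insert_of_mem hj))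
              (hpair j (Finset.mem_insert_of_mem hj) a hmema)
              (hpair i (Finset.mem_insert_of_mem hi) a hmema)
            exact ⟨x, ⟨hxi, hxa⟩, hxj, hxa⟩)
        refine ⟨t, ?_⟩
        intro i hi
        rcases Finset.mem_insert.mp hi with rfl | hi'
        · exact (htmem i0 hi0).2
        · exact (htmem i hi').1


end TreeLemmas


def extendTree (tr : SimpleGraph T) (t0 : T) : SimpleGraph (Option T) where
  Adj x y := match x, y with
    | some a, some b => tr.Adj a b
    | some a, none => a = t0
    | none, some b => b = t0
    | none, none => False
  symm := by
    constructor
    rintro (_ | a) (_ | b) h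
    · exact h
    · exact h
    · exact h
    · exact h.symm
  loopless := by
    constructor
    rintro (_ | a) h
    · exact h
    · exact tr.loopless.irrefl a h

variable {tr : SimpleGraph T} {t0 : T}

@[simp] lemma extendTree_adj_some_some {a b : T} :
    (extendTree tr t0).Adj (some a) (some b) ↔ tr.Adj a b := Iff.rfl
@[simp] lemma extendTree_adj_none_some {b : T} :
    (extendTree tr t0).Adj none (some b) ↔ b = t0 := Iff.rfl
@[simp] lemma extendTree_adj_some_none {a : T} :
    (extendTree tr t0).Adj (some a) none ↔ a = t0 := Iff.rfl
@[simp] lemma extendTree_adj_none_none :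
    ¬ (extendTree tr t0).Adj none none := fun h => h

def someHom : tr →g extendTree tr t0 where
  toFun := some
  map_rel' := fun h => h

@[simp] lemma someHom_apply (a : T) : (someHom (tr := tr) (t0 := t0)) a = some a := rfl

lemma down_walk :
    ∀ {x y : Option T} (w : (extendTree tr t0).Walk x y), none ∉ w.support →
      ∀ (a b : T), x = some a → y = some b →
      ∃ w' : tr.Walk a b, w.support = w'.support.map some ∧
        w.edges = w'.edges.map (Sym2.map some) := by
  intro x y w
  induction w with
  | nil =>
      intro _ a b hx hy
      subst hx
      obtain rfl : a = b := Option.some_injective _ (hy ▸ rfl)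
      exact ⟨Walk.nil, by simp, by simp⟩
  | @cons x z y h w ih =>
      intro hnone a b hx hy
      subst hx hy
      cases z with
      | none =>
          refine (hnone ?_).elim
          rw [Walk.support_cons]
          exact List.mem_cons_of_mem _ w.start_mem_support
      | some zc =>
          obtain ⟨w', hs, he⟩ := ih (fun hc => hnone (by simp [hc])) zc b rfl rfl
          exact ⟨Walk.cons h w', congrArg (some a :: ·) hs, congrArg (s(some a, some zc) :: ·) he⟩

lemma extendTree_isTree (ht : tr.IsTree) : (extendTree tr t0).IsTree := by
  constructor
  · -- connected
    rw [connected_iff_exists_forall_reachable]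
    refine ⟨none, ?_⟩
    rintro (_ | a)
    · exact Reachable.refl _
    · have h1 : tr.Reachable t0 a := ht.isConnected.preconnected t0 a
      have h2 : (extendTree tr t0).Reachable (some t0) (some a) := h1.map someHom
      exact (Adj.reachable (by simp)).trans h2
  · -- acyclic
    intro x c hc
    classical
    by_cases hnone : none ∈ c.support
    · -- rotate so the cycle starts at none
      have hc' := hc.rotate hnone
      set d := c.rotate none hnone with hd
      clear_value d
      cases d with
      | nil => exact hc'.ne_nil rfl
      | @cons _ z _ h d' =>
          -- z = some t0
          cases z with
          | none => exact extendTree_adj_none_none h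
          | some zc =>
              obtain rfl : t0 = zc := (extendTree_adj_none_some.mp h).symm
              -- last edge of d' is also s(some t0, none)
              have hrev : ∃ (hh : (extendTree tr t0).Adj none (some t0))
                  (d'' : (extendTree tr t0).Walk (some t0) (some t0)),
                  d'.reverse = Walk.cons hh d'' := by
                cases hdr : d'.reverse with
                | @cons _ z2 _ h2 d2 =>
                    cases z2 with
                    | none => exact absurd h2 extendTree_adj_none_none
                    | some z2c =>
                        obtain rfl : t0 = z2c := (extendTree_adj_none_some.mp h2).symm
                        exact ⟨h2, d2, rfl⟩
              obtain ⟨hh, d'', hdr⟩ := hrev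
              have hedge1 : s(none, some t0) ∈ d'.edges := by
                have : s(none, some t0) ∈ d'.reverse.edges := by
                  rw [hdr]; simp
                rwa [Walk.edges_reverse, List.mem_reverse] at this
              have hnodup := hc'.edges_nodup
              rw [Walk.edges_cons] at hnodup
              exact (List.nodup_cons.mp hnodup).1 hedge1
    · -- cycle avoiding none: transfer down
      cases x with
      | none => exact hnone c.start_mem_support
      | some a =>
          obtain ⟨c', hs, he⟩ := down_walk c hnone a a rfl rfl
          refine ht.IsAcyclic c' ⟨⟨⟨?_⟩, ?_⟩, ?_⟩
          · have := hc.edges_nodup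
            rw [he] at this
            exact this.of_map _
          · intro hnil
            subst hnil
            have hlen : c.length = 0 := by
              have h1 := congrArg List.length hs
              rw [Walk.length_support, List.length_map, Walk.length_support] at h1
              simpa using h1
            have h3 := hc.three_le_length
            omega
          · have htail : c.support.tail = (c'.support.tail).map some := by
              rw [hs]
              cases c'.support <;> simp
            have hnd := hc.support_nodup
            rw [htail] at hnd
            exact hnd.of_map _


lemma clique_in_bag {V T : Type} {G : SimpleGraph V} {tr : SimpleGraph T} {bag : T → Set V}
    (hd : IsTreeDecomp G tr bag) {K : Set V} (hK : K.Finite)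
    (hclique : ∀ a ∈ K, ∀ b ∈ K, a ≠ b → G.Adj a b) :
    ∃ t, ∀ u ∈ K, u ∈ bag t := by
  classical
  obtain ⟨htree, hcover, hconn, hedge⟩ := hd
  obtain ⟨t, htmem⟩ := helly htree hK.toFinset (fun u => {t | u ∈ bag t})
    (fun i _ => hconn i)
    (fun i hi j hj => by
      rcases eq_or_ne i j with rfl | hne
      · obtain ⟨t, htb⟩ := hcover i
        exact ⟨t, htb, htb⟩
      · obtain ⟨t, h1, h2⟩ := hedge i j
          (hclique i (hK.mem_toFinset.mp hi) j (hK.mem_toFinset.mp hj) hne)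
        exact ⟨t, h1, h2⟩)
  exact ⟨t, fun u hu => htmem u (hK.mem_toFinset.mpr hu)⟩

lemma trivial_decomp_mem {V : Type} [Fintype V] (G : SimpleGraph V) :
    Fintype.card V ∈ {k | ∃ (T : Type) (tr : SimpleGraph T) (bag : T → Set V),
      IsTreeDecomp G tr bag ∧ ∀ t, (bag t).ncard ≤ k + 1} := by
  refine ⟨PUnit, ⊥, fun _ => Set.univ, ⟨⟨?_, ?_⟩, ?_, ?_, ?_⟩, ?_⟩
  · constructor
    intro x y
    rw [Subsingleton.elim x y]
  · intro x c hc
    cases c with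
    | nil => exact hc.ne_nil rfl
    | cons h _ => exact h.elim
  · exact fun v => ⟨PUnit.unit, Set.mem_univ v⟩
  · intro v
    haveI : Nonempty ↑{t : PUnit | v ∈ (Set.univ : Set V)} := ⟨⟨PUnit.unit, Set.mem_univ v⟩⟩
    constructor
    intro x y
    rw [Subsingleton.elim x y]
  · exact fun u v _ => ⟨PUnit.unit, Set.mem_univ u, Set.mem_univ v⟩
  · intro t
    rw [Set.ncard_univ, Nat.card_eq_fintype_card]
    omega

lemma tw_set_nonempty {V : Type} [Fintype V] (G : SimpleGraph V) :
    {k | ∃ (T : Type) (tr : SimpleGraph T) (bag : T → Set V),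
      IsTreeDecomp G tr bag ∧ ∀ t, (bag t).ncard ≤ k + 1}.Nonempty :=
  ⟨_, trivial_decomp_mem G⟩


lemma restrict_decomp {V : Type} [Fintype V] (G : SimpleGraph V) (v : V)
    {T : Type} {tr : SimpleGraph T} {bag : T → Set V} {k : ℕ}
    (hd : IsTreeDecomp G tr bag) (hk : ∀ t, (bag t).ncard ≤ k + 1) :
    IsTreeDecomp (G.induce {u | u ≠ v}) tr (fun t => Subtype.val ⁻¹' bag t) ∧
      ∀ t, ((Subtype.val ⁻¹' bag t : Set {u : V // u ≠ v})).ncard ≤ k + 1 := by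
  obtain ⟨htree, hcover, hconn, hedge⟩ := hd
  refine ⟨⟨htree, ?_, ?_, ?_⟩, ?_⟩
  · intro w
    obtain ⟨t, ht⟩ := hcover w.val
    exact ⟨t, ht⟩
  · intro w
    exact hconn w.val
  · intro a b hab
    obtain ⟨t, h1, h2⟩ := hedge a.val b.val hab
    exact ⟨t, h1, h2⟩
  · intro t
    calc (Subtype.val ⁻¹' bag t : Set {u : V // u ≠ v}).ncard
        = (Subtype.val '' (Subtype.val ⁻¹' bag t) : Set V).ncard :=
          (Set.ncard_image_of_injective _ Subtype.val_injective).symm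
      _ ≤ (bag t).ncard := Set.ncard_le_ncard (Set.image_preimage_subset _ _) (bag t).toFinite
      _ ≤ k + 1 := hk t


def extBag {V T : Type} (G : SimpleGraph V) (v : V) (bag : T → Set {u : V // u ≠ v}) :
    Option T → Set V
  | none => insert v (G.neighborSet v)
  | some t => Subtype.val '' bag t

@[simp] lemma extBag_none {V T : Type} (G : SimpleGraph V) (v : V)
    (bag : T → Set {u : V // u ≠ v}) : extBag G v bag none = insert v (G.neighborSet v) := rfl
@[simp] lemma extBag_some {V T : Type} (G : SimpleGraph V) (v : V)
    (bag : T → Set {u : V // u ≠ v}) (t : T) : extBag G v bag (some t) = Subtype.val '' bag t := rfl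

lemma extend_reach_aux {T : Type} {tr : SimpleGraph T} {t0 : T} (ht : tr.IsTree)
    {B : Set T} (hB : (tr.induce B).Connected) (ht0 : t0 ∈ B)
    {S : Set (Option T)} (hnone : none ∈ S) (hsome : ∀ b ∈ B, some b ∈ S)
    {a : T} (ha : a ∈ B) :
    ((extendTree tr t0).induce S).Reachable ⟨some a, hsome a ha⟩ ⟨none, hnone⟩ := by
  obtain ⟨p, hp, hpS⟩ := exists_path_in ht hB ha ht0
  have hw : ∀ z ∈ (p.map (someHom (t0 := t0))).support, z ∈ S := by
    intro z hz
    rw [Walk.support_map] at hz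
    obtain ⟨b, hb, rfl⟩ := List.mem_map.mp hz
    exact hsome b (hpS b hb)
  have h1 := reachable_induce_of_walk (p.map (someHom (t0 := t0))) hw
    (hsome a ha) (hsome t0 ht0)
  have h2 : ((extendTree tr t0).induce S).Adj ⟨some t0, hsome t0 ht0⟩ ⟨none, hnone⟩ := by
    simp [comap_adj]
  exact h1.trans h2.reachable

lemma extend_decomp {V : Type} [Fintype V] (G : SimpleGraph V) (v : V)
    (hsimp : ∀ a ∈ G.neighborSet v, ∀ b ∈ G.neighborSet v, a ≠ b → G.Adj a b)
    {T : Type} {tr : SimpleGraph T} {bag : T → Set {u : V // u ≠ v}} {k : ℕ}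
    (hd : IsTreeDecomp (G.induce {u | u ≠ v}) tr bag) (hk : ∀ t, (bag t).ncard ≤ k + 1) :
    ∃ (T' : Type) (tr' : SimpleGraph T') (bag' : T' → Set V),
      IsTreeDecomp G tr' bag' ∧
        ∀ t, (bag' t).ncard ≤ max (G.neighborSet v).ncard k + 1 := by
  classical
  -- the set of neighbours of v, inside the subtype
  set N : Set {u : V // u ≠ v} := {w | G.Adj v w.val} with hN
  have hNclique : ∀ a ∈ N, ∀ b ∈ N, a ≠ b → (G.induce {u | u ≠ v}).Adj a b := by
    intro a haN b hbN hne
    have : a.val ≠ b.val := fun h => hne (Subtype.ext h)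
    exact hsimp a.val haN b.val hbN this
  obtain ⟨t0, ht0⟩ := clique_in_bag hd N.toFinite hNclique
  obtain ⟨htree, hcover, hconn, hedge⟩ := hd
  refine ⟨Option T, extendTree tr t0, extBag G v bag,
    ⟨extendTree_isTree htree, ?_, ?_, ?_⟩, ?_⟩
  · -- cover
    intro u
    by_cases hu : u = v
    · exact ⟨none, by simp [hu]⟩
    · obtain ⟨t, htb⟩ := hcover ⟨u, hu⟩
      exact ⟨some t, ⟨⟨u, hu⟩, htb, rfl⟩⟩
  · -- connectivity
    intro u
    by_cases huv : u = v
    · -- the set is {none}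
      subst huv
      have hset : {node : Option T | u ∈ extBag G u bag node} = {none} := by
        ext node
        cases node with
        | none => simp
        | some t =>
            simp only [Set.mem_setOf_eq, Set.mem_singleton_iff]
            constructor
            · rintro ⟨w, _, hw⟩
              exact absurd hw w.2
            · intro h
              exact absurd h (by simp)
      rw [hset]
      haveI : Nonempty ↑({none} : Set (Option T)) := ⟨⟨none, rfl⟩⟩
      constructor
      intro x y
      have : x = y := Subtype.ext (x.2.trans y.2.symm)
      rw [this]
    · -- u ≠ v
      set B : Set T := {t | ⟨u, huv⟩ ∈ bag t} with hB
      have hBconn : (tr.induce B).Connected := hconn ⟨u, huv⟩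
      have hmem_some : ∀ t : T, (u ∈ (Subtype.val '' bag t : Set V)) ↔ t ∈ B := by
        intro t
        constructor
        · rintro ⟨w, hw, hwv⟩
          have : w = ⟨u, huv⟩ := Subtype.ext hwv
          rwa [this] at hw
        · intro htB
          exact ⟨⟨u, huv⟩, htB, rfl⟩
      by_cases hadj : u ∈ G.neighborSet v
      · -- set is insert none (some '' B)
        have hset : {node : Option T | u ∈ extBag G v bag node} = insert none (some '' B) := by
          ext node
          cases node with
          | none => simp [hadj]
          | some t => simp [hmem_some t]
        rw [hset]
        have ht0B : t0 ∈ B := ht0 ⟨u, huv⟩ hadj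
        have hsome : ∀ b ∈ B, some b ∈ insert none (some '' B) := fun b hb =>
          Set.mem_insert_of_mem _ ⟨b, hb, rfl⟩
        have hnone : (none : Option T) ∈ insert none (some '' B) := Set.mem_insert _ _
        haveI : Nonempty ↑(insert none (some '' B) : Set (Option T)) := ⟨⟨none, hnone⟩⟩
        constructor
        rintro ⟨x, hx⟩ ⟨y, hy⟩
        have key : ∀ (z : Option T) (hz : z ∈ insert none (some '' B)),
            ((extendTree tr t0).induce (insert none (some '' B))).Reachable
              ⟨z, hz⟩ ⟨none, hnone⟩ := by
          intro z hz
          rcases hz with rfl | ⟨b, hb, rfl⟩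
          · exact Reachable.refl _
          · exact extend_reach_aux htree hBconn ht0B hnone hsome hb
        exact (key x hx).trans (key y hy).symm
      · -- set is some '' B
        have hset : {node : Option T | u ∈ extBag G v bag node} = some '' B := by
          ext node
          cases node with
          | none => simp [hadj, huv]
          | some t => simp [hmem_some t]
        rw [hset]
        obtain ⟨t1, ht1⟩ := hcover ⟨u, huv⟩
        haveI : Nonempty ↑(some '' B : Set (Option T)) := ⟨⟨some t1, t1, ht1, rfl⟩⟩
        constructor
        rintro ⟨x, a, ha, rfl⟩ ⟨y, b, hb, rfl⟩
        obtain ⟨p, hp, hpS⟩ := exists_path_in htree hBconn ha hb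
        have hw : ∀ z ∈ (p.map (someHom (t0 := t0))).support, z ∈ (some '' B : Set (Option T)) := by
          intro z hz
          rw [Walk.support_map] at hz
          obtain ⟨c, hc, rfl⟩ := List.mem_map.mp hz
          exact ⟨c, hpS c hc, rfl⟩
        exact reachable_induce_of_walk (p.map (someHom (t0 := t0))) hw _ _
  · -- edges
    intro a b hab
    by_cases hav : a = v
    · subst hav
      exact ⟨none, Set.mem_insert _ _, Set.mem_insert_of_mem _ hab⟩
    · by_cases hbv : b = v
      · subst hbv
        exact ⟨none, Set.mem_insert_of_mem _ hab.symm, Set.mem_insert _ _⟩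
      · have : (G.induce {u | u ≠ v}).Adj ⟨a, hav⟩ ⟨b, hbv⟩ := hab
        obtain ⟨t, h1, h2⟩ := hedge _ _ this
        exact ⟨some t, ⟨⟨a, hav⟩, h1, rfl⟩, ⟨⟨b, hbv⟩, h2, rfl⟩⟩
  · -- sizes
    intro t
    cases t with
    | none =>
        have hv : v ∉ G.neighborSet v := fun h => G.loopless.irrefl v h
        have : (insert v (G.neighborSet v)).ncard = (G.neighborSet v).ncard + 1 :=
          Set.ncard_insert_of_notMem hv (G.neighborSet v).toFinite
        simp only [extBag_none, this]
        have := le_max_left (G.neighborSet v).ncard k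
        omega
    | some t =>
        have h1 : ((Subtype.val '' bag t : Set V)).ncard = (bag t).ncard :=
          Set.ncard_image_of_injective _ Subtype.val_injective
        have h2 := hk t
        have := le_max_right (G.neighborSet v).ncard k
        simp only [extBag_some, h1]
        omega



/-- The simplicial rule: if `v` is a simplicial vertex of `G` (its neighborhood
induces a clique), then `tw(G) = max (deg v) (tw (G - v))`. -/
theorem stmt5 {V : Type} [Fintype V] (G : SimpleGraph V) (v : V)
    (hsimp : ∀ a ∈ G.neighborSet v, ∀ b ∈ G.neighborSet v, a ≠ b → G.Adj a b) :
    treewidth G = max (G.neighborSet v).ncard (treewidth (G.induce {u | u ≠ v})) := by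
  classical
  have hSG := tw_set_nonempty G
  haveI : Fintype {u : V // u ≠ v} := Subtype.fintype _
  have hSG' := tw_set_nonempty (G.induce {u | u ≠ v})
  apply le_antisymm
  · obtain ⟨T, tr, bag, hd, hk⟩ := Nat.sInf_mem hSG'
    obtain ⟨T', tr', bag', hd', hk'⟩ := extend_decomp G v hsimp hd hk
    exact Nat.sInf_le ⟨T', tr', bag', hd', hk'⟩
  · obtain ⟨T, tr, bag, hd, hk⟩ := Nat.sInf_mem hSG
    apply max_le
    · have hclq : ∀ a ∈ insert v (G.neighborSet v), ∀ b ∈ insert v (G.neighborSet v),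
          a ≠ b → G.Adj a b := by
        rintro a ha b hb hne
        rcases ha with rfl | ha
        · rcases hb with rfl | hb
          · exact absurd rfl hne
          · exact hb
        · rcases hb with rfl | hb
          · exact ha.symm
          · exact hsimp a ha b hb hne
      obtain ⟨t, htK⟩ := clique_in_bag hd (insert v (G.neighborSet v)).toFinite hclq
      have h1 : (insert v (G.neighborSet v)).ncard ≤ (bag t).ncard :=
        Set.ncard_le_ncard (fun u hu => htK u hu) (bag t).toFinite
      have h2 : (insert v (G.neighborSet v)).ncard = (G.neighborSet v).ncard + 1 :=
        Set.ncard_insert_of_notMem (fun h => G.loopless.irrefl v h) (G.neighborSet v).toFinite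
      have h3 := hk t
      have h4 : (G.neighborSet v).ncard + 1 ≤ treewidth G + 1 := by
        rw [← h2]
        exact h1.trans h3
      exact Nat.succ_le_succ_iff.mp h4
    · obtain ⟨hd', hk'⟩ := restrict_decomp G v hd hk
      exact Nat.sInf_le ⟨T, tr, _, hd', hk'⟩
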